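/- Let P be a normal propositional program whose set of head atoms is disjoint from a domain D, and let (R⁺, R⁻) be a pair of disjoint subsets of D. If for every classical model M of P, either R⁺ ⊄ M or R⁻ ∩ M ≠ ∅, then (R⁺, R⁻) is an inconsistency reason of P wrt. D. -/

import Mathlib

structure Rule (Atom : Type) where
  head : Atom
  pbody : Set Atom
  nbody : Set Atom

def satRule {Atom : Type} (I : Set Atom) (r : Rule Atom) : Prop :=
  r.pbody ⊆ I ∧ r.nbody ∩ I = ∅ → r.head ∈ I

def isModel {Atom : Type} (I : Set Atom) (P : Set (Rule Atom)) : Prop :=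
  ∀ r ∈ P, satRule I r

def reduct {Atom : Type} (P : Set (Rule Atom)) (I : Set Atom) : Set (Rule Atom) :=
  {r' | ∃ r ∈ P, r.nbody ∩ I = ∅ ∧ r' = Rule.mk r.head r.pbody ∅}

def isAnswerSet {Atom : Type} (P : Set (Rule Atom)) (I : Set Atom) : Prop :=
  isModel I (reduct P I) ∧ ∀ J, isModel J (reduct P I) → I ⊆ J

def facts {Atom : Type} (F : Set Atom) : Set (Rule Atom) :=
  {r | ∃ a ∈ F, r = Rule.mk a ∅ ∅}

theorem stmt7 {Atom : Type} (P : Set (Rule Atom)) (D Rp Rm : Set Atom)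
    (hHD : ∀ r ∈ P, r.head ∉ D)
    (hRp : Rp ⊆ D) (hRm : Rm ⊆ D) (hdisj : Rp ∩ Rm = ∅)
    (h : ∀ M, isModel M P → ¬ Rp ⊆ M ∨ (Rm ∩ M).Nonempty) :
    ∀ F, F ⊆ D → Rp ⊆ F → Rm ∩ F = ∅ →
      ¬ ∃ I, isAnswerSet (P ∪ facts F) I := by
  intro F hFD hRpF hRmF ⟨I, hMod, hMin⟩
  -- I is a classical model of P
  have hModP : isModel I P := by
    intro r hr ⟨hp, hn⟩
    have : Rule.mk r.head r.pbody ∅ ∈ reduct (P ∪ facts F) I :=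
      ⟨r, Or.inl hr, hn, rfl⟩
    exact hMod (Rule.mk r.head r.pbody ∅) this ⟨hp, Set.empty_inter I⟩
  -- F ⊆ I
  have hFI : F ⊆ I := by
    intro a ha
    have : Rule.mk a ∅ ∅ ∈ reduct (P ∪ facts F) I :=
      ⟨Rule.mk a ∅ ∅, Or.inr ⟨a, ha, rfl⟩, Set.empty_inter I, rfl⟩
    exact hMod _ this ⟨Set.empty_subset I, Set.empty_inter I⟩
  -- I ∩ D ⊆ F via minimality
  have hJ : isModel (I \ (D \ F)) (reduct (P ∪ facts F) I) := by
    rintro r' ⟨r, hr, hn, rfl⟩ ⟨hp, -⟩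
    rcases hr with hr | ⟨a, ha, rfl⟩
    · have hhead : r.head ∈ I := hModP r hr ⟨fun x hx => ((hp hx).1), hn⟩
      exact ⟨hhead, fun hd => hHD r hr hd.1⟩
    · exact ⟨hFI ha, fun hd => hd.2 ha⟩
  have hIJ := hMin _ hJ
  have hIDF : ∀ a ∈ I, a ∈ D → a ∈ F := fun a ha hd => by
    rcases hIJ ha with ⟨-, hnd⟩
    by_contra hf; exact hnd ⟨hd, hf⟩
  rcases h I hModP with hc | ⟨a, haRm, haI⟩
  · exact hc (fun a ha => hFI (hRpF ha))
  · have haF : a ∈ F := hIDF a haI (hRm haRm)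
    exact absurd (Set.mem_inter haRm haF) (by simp [hRmF])
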